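/- arXiv:2304.09598 — 2 statements merged into one kernel-verified Lean document; each statement's English description precedes it below -/
import Mathlib

section
/- If α is a simple multisegment, i.e., α = {[b,e], [b+1,e+1], ..., [b+n-1, e+n-1]} for some integers b ≤ e and n ≥ 1, then the number of segments in the dual multisegment α̃ equals the length of the longest segment of α: n_{α̃} = L_α = e - b + 1. -/
/-- A segment `[b, e]` is the set of consecutive integers `{b, b+1, ..., e}`,
recorded as the pair `(b, e)` of its base `b` and end `e`. -/
abbrev Segment : Type := ℤ × ℤ

/-- A multisegment is a finite multiset of segments. -/
abbrev Multisegment : Type := Multiset Segment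

/-- The length `e - b + 1` of the segment `[b, e]`. -/
def Segment.len (Δ : Segment) : ℤ := Δ.2 - Δ.1 + 1

/-- `[b₁,e₁]` precedes `[b₂,e₂]` iff `b₁ < b₂`, `e₁ < e₂` and `b₂ ≤ e₁ + 1`. -/
def Precedes (Δ₁ Δ₂ : Segment) : Prop :=
  Δ₁.1 < Δ₂.1 ∧ Δ₁.2 < Δ₂.2 ∧ Δ₂.1 ≤ Δ₁.2 + 1

instance (Δ₁ Δ₂ : Segment) : Decidable (Precedes Δ₁ Δ₂) := by
  unfold Precedes; infer_instance

/-- Every member of a multisegment is a genuine (nonempty) segment. -/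
def IsMultisegment (α : Multisegment) : Prop := ∀ Δ ∈ α, Δ.1 ≤ Δ.2

/-- The rank `r_{i,j}`: the number of segments `[k,l]` of `α` with `k ≤ i` and `j ≤ l`. -/
def rank (α : Multisegment) (i j : ℤ) : ℕ :=
  (α.filter fun Δ => Δ.1 ≤ i ∧ j ≤ Δ.2).card

/-- `n_α`: the number of segments of `α`, counted with multiplicity. -/
def nSeg (α : Multisegment) : ℕ := Multiset.card α

instance : Std.Commutative (fun a b : ℤ => max a b) := ⟨max_comm⟩
instance : Std.Associative (fun a b : ℤ => max a b) := ⟨max_assoc⟩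

/-- `L_α`: the length of the longest segment of `α` (0 for the empty multisegment). -/
def Lmax (α : Multisegment) : ℤ := (α.map Segment.len).fold (fun a b => max a b) 0

/-- The support `∪_{Δ ∈ α} Δ` of a multisegment, as a finite set of integers. -/
noncomputable def supp (α : Multisegment) : Finset ℤ := α.toFinset.biUnion fun Δ => Finset.Icc Δ.1 Δ.2

/-- `S_α`: the number of integers in `∪_{Δ ∈ α} Δ`. -/
noncomputable def Ssize (α : Multisegment) : ℕ := (supp α).card

/-- `c_α`: the number of interval components of `∪_{Δ ∈ α} Δ`
(counted via their left endpoints). -/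
noncomputable def comp (α : Multisegment) : ℕ :=
  ((supp α).filter fun x => x - 1 ∉ supp α).card

/-! ### The Mœglin–Waldspurger algorithm -/

/-- Remove the end value from a segment, dropping it if it becomes empty. -/
def removeEnd (Δ : Segment) : Option Segment :=
  if Δ.1 ≤ Δ.2 - 1 then some (Δ.1, Δ.2 - 1) else none

/-- Among the segments of `l` with end value `m`, pick a shortest one (if any). -/
def pickShortest (m : ℤ) (l : List Segment) : Option Segment :=
  (l.filter fun Δ => Δ.2 == m).foldl (fun acc Δ =>
    match acc with
    | none => some Δ
    | some Δ' => if Δ'.1 < Δ.1 then some Δ else some Δ') none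

/-- Starting from a current segment `Δ`, greedily build the Mœglin–Waldspurger chain:
at each step choose a shortest segment preceding the current one whose end value is one
less.  Returns the chosen chain together with the unchosen segments. -/
def pickChain : ℕ → Segment → List Segment → List Segment × List Segment
  | 0, Δ, rest => ([Δ], rest)
  | n + 1, Δ, rest =>
    match pickShortest (Δ.2 - 1) (rest.filter fun Δ' => decide (Precedes Δ' Δ)) with
    | none => ([Δ], rest)
    | some Δ' =>
      let p := pickChain n Δ' (rest.erase Δ')
      (Δ :: p.1, p.2)

/-- One iteration of the Mœglin–Waldspurger algorithm: returns the produced dual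
segment `[m, e]` together with the multisegment `α'` left after removing the chosen
end values. -/
def mwIter (l : List Segment) : Option (Segment × List Segment) :=
  match (l.map fun Δ => Δ.2).max? with
  | none => none
  | some e =>
    match pickShortest e l with
    | none => none
    | some Δe =>
      let p := pickChain l.length Δe (l.erase Δe)
      some ((Δe.2 - ((p.1.length : ℤ) - 1), e), p.2 ++ p.1.filterMap removeEnd)

/-- The total number of integers (with multiplicity) in a list of segments. -/
def totalSize (l : List Segment) : ℕ := (l.map fun Δ => (Δ.2 - Δ.1 + 1).toNat).sum

/-- Fueled iteration of the Mœglin–Waldspurger algorithm. -/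
def mwAux : ℕ → List Segment → List Segment
  | 0, _ => []
  | n + 1, l =>
    match mwIter l with
    | none => []
    | some (Δ', l') => Δ' :: mwAux n l'

/-- The Mœglin–Waldspurger dual `α̃` of a multisegment `α`. -/
noncomputable def dual (α : Multisegment) : Multisegment :=
  (mwAux (totalSize α.toList) α.toList : List Segment)

/-! ### The partial order on multisegments -/

/-- An elementary move on multisegments: either the union–intersection move
(replace distinct overlapping `Δ₁, Δ₂` by `Δ₁ ∩ Δ₂` and `Δ₁ ∪ Δ₂`) or the
conjunction move (replace two disjoint adjacent segments by their union). -/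
inductive MoveStep : Multisegment → Multisegment → Prop
  | unionInter (α : Multisegment) (Δ₁ Δ₂ : Segment)
      (hmeet : max Δ₁.1 Δ₂.1 ≤ min Δ₁.2 Δ₂.2) (hne : Δ₁ ≠ Δ₂) :
      MoveStep (Δ₁ ::ₘ Δ₂ ::ₘ α)
        ((max Δ₁.1 Δ₂.1, min Δ₁.2 Δ₂.2) ::ₘ (min Δ₁.1 Δ₂.1, max Δ₁.2 Δ₂.2) ::ₘ α)
  | conj (α : Multisegment) (Δ₁ Δ₂ : Segment) (h : Δ₂.1 = Δ₁.2 + 1) :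
      MoveStep (Δ₁ ::ₘ Δ₂ ::ₘ α) ((Δ₁.1, Δ₂.2) ::ₘ α)

/-- The partial order `α ≤ β` on multisegments, generated by the elementary moves. -/
def mle (α β : Multisegment) : Prop := Relation.ReflTransGen MoveStep α β

/-- A ladder multisegment: the segments can be listed with strictly increasing
bases and strictly increasing ends. -/
def IsLadder (α : Multisegment) : Prop :=
  ∃ l : List Segment, (l : Multiset Segment) = α ∧
    l.Chain' fun Δ₁ Δ₂ => Δ₁.1 < Δ₂.1 ∧ Δ₁.2 < Δ₂.2

/-- `C_α`: the maximal number of (nonempty) components in a decomposition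
`α = ⊔ᵢ αᵢ` satisfying `α̃ = ⊔ᵢ α̃ᵢ`. -/
noncomputable def Cmax (α : Multisegment) : ℕ :=
  sSup {n | ∃ parts : Multiset Multisegment, Multiset.card parts = n ∧
    (∀ γ ∈ parts, γ ≠ 0) ∧ parts.sum = α ∧ (parts.map dual).sum = dual α}

/-- The simple multisegment `{[b,e], [b+1,e+1], ..., [b+n-1,e+n-1]}`. -/
def simpleMS (b e : ℤ) (n : ℕ) : Multisegment :=
  (Multiset.range n).map fun i => (b + i, e + i)

/-- The symmetric simple multisegment `{[-e,b], [-e+1,b+1], ..., [-b,e]}`. -/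
def symmSimple (b e : ℤ) : Multisegment :=
  (Multiset.range (e - b + 1).toNat).map fun i => (-e + i, b + i)

/-! Auxiliary lemmas for statement 8 -/

private theorem simpleMS_eq (b e : ℤ) (n : ℕ) : simpleMS b e n
    = (Multiset.range n).map (fun i : ℕ => ((b + (i:ℤ), e + (i:ℤ)) : Segment)) := by
  rw [simpleMS]
  rw [show ((Multiset.range n : Multiset ℕ) : Multiset ℤ)
      = Multiset.map (fun a : ℕ => (a:ℤ)) (Multiset.range n) from Multiset.bind_singleton _ _]
  rw [Multiset.map_map]
  rfl

private theorem zmax {l : List ℤ} {a : ℤ} : l.max? = some a ↔ a ∈ l ∧ ∀ b ∈ l, b ≤ a :=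
  List.max?_eq_some_iff_legacy (anti := ⟨fun _ _ h h' => le_antisymm h h'⟩) le_refl max_choice
    (fun _ _ _ => max_le_iff)

private theorem coe_erase_seg (a : Segment) :
    ∀ l : List Segment, ((l.erase a : List Segment) : Multiset Segment)
      = (l : Multiset Segment).erase a := by
  intro l
  induction l with
  | nil => rfl
  | cons x l ih =>
    by_cases h : x = a
    · subst h
      rw [List.erase_cons_head, ← Multiset.cons_coe, Multiset.erase_cons_head]
    · rw [List.erase_cons_tail (by simpa using h), ← Multiset.cons_coe, ← Multiset.cons_coe,
        Multiset.erase_cons_tail _ h, ih]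

private theorem range_filter_beq (n i₀ : ℕ) (h : i₀ < n) :
    (List.range n).filter (fun i => i == i₀) = [i₀] := by
  induction n with
  | zero => omega
  | succ n ih =>
    rw [List.range_succ, List.filter_append]
    rcases Nat.lt_or_ge i₀ n with h' | h'
    · rw [ih h']
      have hne : (n == i₀) = false := by simp; omega
      simp [List.filter_cons, hne]
    · have hi : i₀ = n := by omega
      subst hi
      have h1 : List.filter (fun i => i == i₀) (List.range i₀) = [] := by
        apply List.filter_eq_nil_iff.2
        intro x hx
        simp only [beq_iff_eq, decide_eq_true_eq]
        have := List.mem_range.1 hx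
        omega
      rw [h1]
      simp

private theorem filter_single {f : ℕ → Segment} {n i₀ : ℕ} {p : Segment → Bool}
    {l : List Segment}
    (hl : (l : Multiset Segment) = (Multiset.range n).map f)
    (h₀ : i₀ < n) (hp : ∀ i < n, (p (f i) = true ↔ i = i₀)) :
    l.filter p = [f i₀] := by
  have hperm : l.Perm ((List.range n).map f) := by
    rw [← Multiset.coe_eq_coe, hl, ← Multiset.map_coe]
    rfl
  rw [← List.perm_singleton]
  have key : ((List.range n).map f).filter p = [f i₀] := by
    rw [List.filter_map]
    have : (List.range n).filter (p ∘ f) = [i₀] := by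
      rw [List.filter_congr (q := fun i => i == i₀) ?_, range_filter_beq n i₀ h₀]
      intro x hx
      rw [Bool.eq_iff_iff]
      simp only [Function.comp_apply, beq_iff_eq]
      exact hp x (List.mem_range.1 hx)
    rw [this, List.map_singleton]
  exact key ▸ hperm.filter p

private theorem pickShortest_eq {m : ℤ} {l : List Segment} {x : Segment}
    (h : l.filter (fun Δ => Δ.2 == m) = [x]) : pickShortest m l = some x := by
  unfold pickShortest
  rw [h]
  rfl

private theorem pickShortest_filter {m : ℤ} {q : Segment → Bool} {l : List Segment} {x : Segment}
    (h : l.filter (fun Δ => (Δ.2 == m) && q Δ) = [x]) :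
    pickShortest m (l.filter q) = some x := by
  apply pickShortest_eq
  rw [List.filter_filter]
  exact h

private theorem pickChain_simple (b e : ℤ) (hbe : b ≤ e) :
    ∀ i fuel (rest : List Segment), i ≤ fuel →
      (rest : Multiset Segment) = (Multiset.range i).map (fun j : ℕ => (b + (j : ℤ), e + (j : ℤ))) →
      (pickChain fuel (b + (i : ℤ), e + (i : ℤ)) rest).2 = [] ∧
      ((pickChain fuel (b + (i : ℤ), e + (i : ℤ)) rest).1 : Multiset Segment)
        = (Multiset.range (i + 1)).map (fun j : ℕ => (b + (j : ℤ), e + (j : ℤ))) ∧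
      (pickChain fuel (b + (i : ℤ), e + (i : ℤ)) rest).1.length = i + 1 := by
  intro i
  induction i with
  | zero =>
    intro fuel rest hf hrest
    have hr : rest = [] := by
      rw [← Multiset.coe_eq_zero]
      simpa using hrest
    subst hr
    cases fuel with
    | zero => simp [pickChain]
    | succ fuel =>
      have : pickChain (fuel + 1) (b + ((0:ℕ) : ℤ), e + ((0:ℕ) : ℤ)) [] =
          ([(b + ((0:ℕ) : ℤ), e + ((0:ℕ) : ℤ))], []) := by
        rw [pickChain]
        rfl
      rw [this]
      simp
  | succ i ih =>
    intro fuel rest hf hrest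
    obtain ⟨fuel, rfl⟩ : ∃ f', fuel = f' + 1 := ⟨fuel - 1, by omega⟩
    have hps : pickShortest ((b + ((i+1 : ℕ) : ℤ), e + ((i+1 : ℕ) : ℤ)).2 - 1)
        (rest.filter fun Δ' => decide (Precedes Δ' (b + ((i+1 : ℕ) : ℤ), e + ((i+1 : ℕ) : ℤ))))
        = some (b + (i : ℤ), e + (i : ℤ)) := by
      apply pickShortest_filter
      exact filter_single hrest (Nat.lt_succ_self i) (by
        intro j hj
        simp only [Bool.and_eq_true, beq_iff_eq, decide_eq_true_eq, Precedes]
        push_cast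
        constructor
        · rintro ⟨h1, -⟩; omega
        · rintro rfl
          refine ⟨by omega, decide_eq_true ⟨by omega, by omega, by omega⟩⟩)
    rw [pickChain, hps]
    have herase : ((rest.erase (b + (i : ℤ), e + (i : ℤ)) : List Segment) : Multiset Segment)
        = (Multiset.range i).map (fun j : ℕ => (b + (j : ℤ), e + (j : ℤ))) := by
      rw [coe_erase_seg, hrest, Multiset.range_succ, Multiset.map_cons,
        Multiset.erase_cons_head]
    obtain ⟨h1, h2, h3⟩ := ih fuel (rest.erase (b + (i : ℤ), e + (i : ℤ))) (by omega) herase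
    refine ⟨h1, ?_, ?_⟩
    · show ((_ :: _ : List Segment) : Multiset Segment) = _
      conv_rhs => rw [Multiset.range_succ, Multiset.map_cons]
      rw [← Multiset.cons_coe, h2]
    · show (_ :: _ : List Segment).length = _
      rw [List.length_cons, h3]

private theorem filterMap_eq_map_of {α β : Type*} (f : α → Option β) (g : α → β) :
    ∀ l : List α, (∀ x ∈ l, f x = some (g x)) → l.filterMap f = l.map g := by
  intro l
  induction l with
  | nil => intro _; rfl
  | cons a l ih =>
    intro h
    rw [List.filterMap_cons, h a (List.mem_cons_self (a := a) (l := l)), List.map_cons,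
      ih fun x hx => h x (List.mem_cons_of_mem a hx)]

private theorem filterMap_eq_nil_of {α β : Type*} (f : α → Option β) :
    ∀ l : List α, (∀ x ∈ l, f x = none) → l.filterMap f = [] := by
  intro l
  induction l with
  | nil => intro _; rfl
  | cons a l ih =>
    intro h
    rw [List.filterMap_cons, h a (List.mem_cons_self (a := a) (l := l)),
      ih fun x hx => h x (List.mem_cons_of_mem a hx)]

private theorem mwIter_simple (b e : ℤ) (n : ℕ) (hbe : b ≤ e) (hn : 1 ≤ n) (l : List Segment)
    (hl : (l : Multiset Segment) = simpleMS b e n) :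
    ∃ d l', mwIter l = some (d, l') ∧
      (l' : Multiset Segment) = if b < e then simpleMS b (e - 1) n else 0 := by
  obtain ⟨m, rfl⟩ : ∃ m, n = m + 1 := ⟨n - 1, by omega⟩
  rw [simpleMS_eq] at hl
  have hmem : ∀ y, y ∈ l.map (fun Δ => Δ.2) ↔ ∃ j < m + 1, y = e + (j : ℤ) := by
    intro y
    have hcoe : ((l.map fun Δ => Δ.2 : List ℤ) : Multiset ℤ)
        = (Multiset.range (m + 1)).map (fun j : ℕ => e + (j : ℤ)) := by
      rw [← Multiset.map_coe, hl, Multiset.map_map]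
      rfl
    rw [← Multiset.mem_coe, hcoe]
    simp only [Multiset.mem_map, Multiset.mem_range]
    constructor
    · rintro ⟨j, hj, rfl⟩; exact ⟨j, hj, rfl⟩
    · rintro ⟨j, hj, rfl⟩; exact ⟨j, hj, rfl⟩
  have hmax : (l.map fun Δ => Δ.2).max? = some (e + (m : ℤ)) := by
    rw [zmax]
    constructor
    · exact (hmem _).2 ⟨m, by omega, rfl⟩
    · intro y hy
      obtain ⟨j, hj, rfl⟩ := (hmem y).1 hy
      omega
  have hps : pickShortest (e + (m : ℤ)) l = some (b + (m : ℤ), e + (m : ℤ)) := by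
    apply pickShortest_eq
    exact filter_single hl (Nat.lt_succ_self m) (by
      intro j hj
      simp only [beq_iff_eq]
      constructor
      · intro h; omega
      · rintro rfl; rfl)
  have hlen : l.length = m + 1 := by
    have := congrArg Multiset.card hl
    simpa using this
  have herase : ((l.erase (b + (m : ℤ), e + (m : ℤ)) : List Segment) : Multiset Segment)
      = (Multiset.range m).map (fun j : ℕ => (b + (j : ℤ), e + (j : ℤ))) := by
    rw [coe_erase_seg, hl, Multiset.range_succ, Multiset.map_cons,
      Multiset.erase_cons_head]
  obtain ⟨h1, h2, h3⟩ := pickChain_simple b e hbe m (l.length)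
    (l.erase (b + (m : ℤ), e + (m : ℤ))) (by omega) herase
  rw [mwIter, hmax]
  simp only [hps]
  refine ⟨_, _, rfl, ?_⟩
  rw [h1, List.nil_append]
  set chain := (pickChain l.length (b + (m : ℤ), e + (m : ℤ))
    (l.erase (b + (m : ℤ), e + (m : ℤ)))).1 with hchain
  have hmemc : ∀ x ∈ chain, ∃ j < m + 1, x = (b + (j : ℤ), e + (j : ℤ)) := by
    intro x hx
    have hx' : x ∈ ((chain : List Segment) : Multiset Segment) := by
      rwa [Multiset.mem_coe]
    rw [h2] at hx'
    simp only [Multiset.mem_map, Multiset.mem_range] at hx'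
    obtain ⟨j, hj, rfl⟩ := hx'
    exact ⟨j, hj, rfl⟩
  by_cases hlt : b < e
  · rw [if_pos hlt]
    have hfm : chain.filterMap removeEnd = chain.map (fun Δ => (Δ.1, Δ.2 - 1)) := by
      apply filterMap_eq_map_of
      intro x hx
      obtain ⟨j, hj, rfl⟩ := hmemc x hx
      rw [removeEnd, if_pos (by simp only; omega)]
    rw [hfm, ← Multiset.map_coe, h2, Multiset.map_map, simpleMS_eq]
    apply Multiset.map_congr rfl
    intro j hj
    simp only [Function.comp_apply]
    refine Prod.ext rfl ?_
    simp only
    ring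
  · rw [if_neg hlt]
    have hbee : b = e := by omega
    subst hbee
    have hfm : chain.filterMap removeEnd = [] := by
      apply filterMap_eq_nil_of
      intro x hx
      obtain ⟨j, hj, rfl⟩ := hmemc x hx
      rw [removeEnd, if_neg (by simp only; omega)]
    rw [hfm]
    rfl

private theorem mwAux_nil (k : ℕ) : mwAux k ([] : List Segment) = [] := by
  cases k with
  | zero => rfl
  | succ k => rw [mwAux]; rfl

private theorem mwAux_simple :
    ∀ fuel (b e : ℤ) (n : ℕ) (l : List Segment), b ≤ e → 1 ≤ n →
      (l : Multiset Segment) = simpleMS b e n → (e - b + 1).toNat ≤ fuel →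
      (mwAux fuel l).length = (e - b + 1).toNat := by
  intro fuel
  induction fuel with
  | zero => intro b e n l hbe hn hl hf; omega
  | succ fuel ih =>
    intro b e n l hbe hn hl hf
    obtain ⟨d, l', hiter, hl'⟩ := mwIter_simple b e n hbe hn l hl
    rw [mwAux, hiter]
    by_cases hlt : b < e
    · rw [if_pos hlt] at hl'
      have := ih b (e - 1) n l' (by omega) hn hl' (by omega)
      rw [List.length_cons, this]
      omega
    · rw [if_neg hlt] at hl'
      have hnil : l' = [] := by rw [← Multiset.coe_eq_zero]; exact hl'
      subst hnil
      rw [List.length_cons, mwAux_nil, List.length_nil]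
      omega

private theorem fold_max_replicate (k : ℕ) (c : ℤ) (hc : 0 ≤ c) (hk : 1 ≤ k) :
    (Multiset.replicate k c).fold (fun a b : ℤ => max a b) 0 = c := by
  induction k with
  | zero => omega
  | succ k ih =>
    rw [Multiset.replicate_succ, Multiset.fold_cons_left]
    rcases Nat.lt_or_ge k 1 with h | h
    · have hk0 : k = 0 := by omega
      subst hk0
      simp only [Multiset.replicate_zero, Multiset.fold_zero]
      omega
    · rw [ih h]
      omega

private theorem map_len_simple (b e : ℤ) (n : ℕ) :
    (simpleMS b e n).map Segment.len = Multiset.replicate n (e - b + 1) := by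
  rw [simpleMS_eq, Multiset.map_map]
  rw [show (Segment.len ∘ fun i : ℕ => ((b + (i:ℤ), e + (i:ℤ)) : Segment))
      = Function.const ℕ (e - b + 1) by
    funext i
    simp only [Function.comp_apply, Function.const_apply, Segment.len]
    ring]
  rw [Multiset.map_const, Multiset.card_range]

private theorem Lmax_simple (b e : ℤ) (n : ℕ) (hbe : b ≤ e) (hn : 1 ≤ n) :
    Lmax (simpleMS b e n) = e - b + 1 := by
  rw [Lmax, map_len_simple, fold_max_replicate n _ (by omega) hn]

private theorem totalSize_simple (b e : ℤ) (n : ℕ) :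
    totalSize (simpleMS b e n).toList = n * (e - b + 1).toNat := by
  rw [totalSize]
  have hs : (((simpleMS b e n).toList.map fun Δ => (Δ.2 - Δ.1 + 1).toNat : List ℕ)).sum
      = (Multiset.map (fun Δ : Segment => (Δ.2 - Δ.1 + 1).toNat) (simpleMS b e n)).sum := by
    rw [← Multiset.sum_coe, ← Multiset.map_coe, Multiset.coe_toList]
  rw [hs, simpleMS_eq, Multiset.map_map]
  rw [show ((fun Δ : Segment => (Δ.2 - Δ.1 + 1).toNat) ∘ fun i : ℕ =>
      ((b + (i:ℤ), e + (i:ℤ)) : Segment)) = Function.const ℕ (e - b + 1).toNat by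
    funext i
    simp only [Function.comp_apply, Function.const_apply]
    congr 1
    ring]
  rw [Multiset.map_const, Multiset.card_range, Multiset.sum_replicate, smul_eq_mul]

/-- for a simple multisegment `α = {[b,e],...,[b+n-1,e+n-1]}` we have
`n_{α̃} = L_α = e - b + 1`. -/
theorem stmt8 (b e : ℤ) (n : ℕ) (hbe : b ≤ e) (hn : 1 ≤ n) :
    (nSeg (dual (simpleMS b e n)) : ℤ) = Lmax (simpleMS b e n) ∧
      Lmax (simpleMS b e n) = e - b + 1 := by
  have hL := Lmax_simple b e n hbe hn
  refine ⟨?_, hL⟩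
  rw [hL]
  have htot : (e - b + 1).toNat ≤ totalSize (simpleMS b e n).toList := by
    rw [totalSize_simple]
    exact Nat.le_mul_of_pos_left _ hn
  rw [nSeg, dual, Multiset.coe_card,
    mwAux_simple _ b e n _ hbe hn (Multiset.coe_toList _) htot]
  omega
end

section
/- If α is a simple multisegment, α ≤ β, and L_α = L_β, then α = β. -/
/-! ### Auxiliary lemmas for statement 9 -/

lemma Lmax_cons (Δ : Segment) (s : Multisegment) :
    Lmax (Δ ::ₘ s) = max Δ.len (Lmax s) := by
  simp [Lmax, Multiset.fold_cons_left]

lemma len_le_Lmax {Δ : Segment} {s : Multisegment} (h : Δ ∈ s) : Δ.len ≤ Lmax s := by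
  induction s using Multiset.induction with
  | empty => simp at h
  | cons a t ih =>
    rw [Lmax_cons]
    rcases Multiset.mem_cons.1 h with rfl | h
    · exact le_max_left _ _
    · exact (ih h).trans (le_max_right _ _)

lemma Lmax_le {s : Multisegment} {c : ℤ} (hc : 0 ≤ c) (h : ∀ Δ ∈ s, Δ.len ≤ c) :
    Lmax s ≤ c := by
  induction s using Multiset.induction with
  | empty => simpa [Lmax]
  | cons a t ih =>
    rw [Lmax_cons]
    exact max_le (h a (Multiset.mem_cons_self _ _))
      (ih fun Δ hΔ => h Δ (Multiset.mem_cons_of_mem hΔ))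

lemma moveStep_isMS {γ δ : Multisegment} (h : MoveStep γ δ) (hγ : IsMultisegment γ) :
    IsMultisegment δ := by
  cases h with
  | unionInter α Δ₁ Δ₂ hmeet hne =>
    have h1 := hγ Δ₁ (Multiset.mem_cons_self _ _)
    have h2 := hγ Δ₂ (Multiset.mem_cons_of_mem (Multiset.mem_cons_self _ _))
    intro Δ hΔ
    rcases Multiset.mem_cons.1 hΔ with rfl | hΔ
    · exact hmeet
    rcases Multiset.mem_cons.1 hΔ with rfl | hΔ
    · simp only []
      omega
    · exact hγ Δ (Multiset.mem_cons_of_mem (Multiset.mem_cons_of_mem hΔ))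
  | conj α Δ₁ Δ₂ hc =>
    have h1 := hγ Δ₁ (Multiset.mem_cons_self _ _)
    have h2 := hγ Δ₂ (Multiset.mem_cons_of_mem (Multiset.mem_cons_self _ _))
    intro Δ hΔ
    rcases Multiset.mem_cons.1 hΔ with rfl | hΔ
    · simp only []; omega
    · exact hγ Δ (Multiset.mem_cons_of_mem (Multiset.mem_cons_of_mem hΔ))

lemma moveStep_Lmax_le {γ δ : Multisegment} (h : MoveStep γ δ) (hγ : IsMultisegment γ) :
    Lmax γ ≤ Lmax δ := by
  cases h with
  | unionInter α Δ₁ Δ₂ hmeet hne =>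
    simp only [Lmax_cons]
    have : Δ₁.len ≤ Segment.len (min Δ₁.1 Δ₂.1, max Δ₁.2 Δ₂.2) := by
      simp [Segment.len]; omega
    have : Δ₂.len ≤ Segment.len (min Δ₁.1 Δ₂.1, max Δ₁.2 Δ₂.2) := by
      simp [Segment.len]; omega
    omega
  | conj α Δ₁ Δ₂ hc =>
    have h1 := hγ Δ₁ (Multiset.mem_cons_self _ _)
    have h2 := hγ Δ₂ (Multiset.mem_cons_of_mem (Multiset.mem_cons_self _ _))
    simp only [Lmax_cons]
    simp only [Segment.len] at *
    omega

lemma mle_Lmax_le {γ δ : Multisegment} (h : mle γ δ) (hγ : IsMultisegment γ) :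
    IsMultisegment δ ∧ Lmax γ ≤ Lmax δ := by
  induction h with
  | refl => exact ⟨hγ, le_rfl⟩
  | tail _ hstep ih =>
    exact ⟨moveStep_isMS hstep ih.1, ih.2.trans (moveStep_Lmax_le hstep ih.1)⟩

lemma mem_simpleMS {b e : ℤ} {n : ℕ} {Δ : Segment} (h : Δ ∈ simpleMS b e n) :
    Δ.2 = Δ.1 + (e - b) ∧ b ≤ Δ.1 := by
  rw [simpleMS] at h
  obtain ⟨i, hi, rfl⟩ := Multiset.mem_map.1 h
  obtain ⟨a, -, rfl⟩ : ∃ a : ℕ, a ∈ Multiset.range n ∧ (a : ℤ) = i := by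
    simpa using hi
  simp only []
  omega

lemma simpleMS_isMS {b e : ℤ} {n : ℕ} (hbe : b ≤ e) : IsMultisegment (simpleMS b e n) := by
  intro Δ hΔ
  have := mem_simpleMS hΔ
  omega

lemma simpleMS_Lmax_le {b e : ℤ} {n : ℕ} (hbe : b ≤ e) :
    Lmax (simpleMS b e n) ≤ e - b + 1 := by
  apply Lmax_le (by omega)
  intro Δ hΔ
  have := mem_simpleMS hΔ
  simp [Segment.len]; omega

lemma moveStep_simple_lt {γ δ : Multisegment} (h : MoveStep γ δ) {b e : ℤ} {n : ℕ}
    (hbe : b ≤ e) (heq : γ = simpleMS b e n) : Lmax γ < Lmax δ := by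
  cases h with
  | unionInter α Δ₁ Δ₂ hmeet hne =>
    have m1 : Δ₁ ∈ simpleMS b e n := heq ▸ Multiset.mem_cons_self _ _
    have m2 : Δ₂ ∈ simpleMS b e n :=
      heq ▸ Multiset.mem_cons_of_mem (Multiset.mem_cons_self _ _)
    have f1 := mem_simpleMS m1
    have f2 := mem_simpleMS m2
    have hne' : Δ₁.1 ≠ Δ₂.1 := by
      intro hcontra
      exact hne (Prod.ext hcontra (by omega))
    rw [heq, Lmax_cons, Lmax_cons]
    have hle := simpleMS_Lmax_le (n := n) hbe
    simp only [Segment.len]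
    omega
  | conj α Δ₁ Δ₂ hc =>
    have m1 : Δ₁ ∈ simpleMS b e n := heq ▸ Multiset.mem_cons_self _ _
    have m2 : Δ₂ ∈ simpleMS b e n :=
      heq ▸ Multiset.mem_cons_of_mem (Multiset.mem_cons_self _ _)
    have f1 := mem_simpleMS m1
    have f2 := mem_simpleMS m2
    rw [heq, Lmax_cons]
    have hle := simpleMS_Lmax_le (n := n) hbe
    simp only [Segment.len]
    omega

/-- if `α` is simple, `α ≤ β` and `L_α = L_β`, then `α = β`. -/
theorem stmt9 (b e : ℤ) (n : ℕ) (hbe : b ≤ e) (hn : 1 ≤ n) (β : Multisegment)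
    (h : mle (simpleMS b e n) β) (hL : Lmax (simpleMS b e n) = Lmax β) :
    simpleMS b e n = β := by
  rcases Relation.ReflTransGen.cases_head h with rfl | ⟨γ, hstep, hrest⟩
  · rfl
  · exfalso
    have h1 : Lmax (simpleMS b e n) < Lmax γ := moveStep_simple_lt hstep hbe rfl
    have h2 : Lmax γ ≤ Lmax β :=
      (mle_Lmax_le hrest (moveStep_isMS hstep (simpleMS_isMS hbe))).2
    omega
end
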